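/- Let H be a group containing elements c1, c2, d, and for i = 1,2 and indices k elements f_i^(k), g_i^(k), satisfying all relations R1^(r) and R2^(r) of the presentation K_r (r ≥ 4) from Theorem 1.1. Then in the abelianization H1 = H/[H,H], the image of d is trivial. Consequently, the abelianization of K_r is free abelian of rank 4r − 2, generated by the images of c1, c2 and f_i^(k), g_i^(k) (i = 1,2, k = 2,…,r); in particular the first Betti number of K_r is 4r − 2. -/

import Mathlib

open scoped commutatorElement


/-- Generators of the presentation `K_r`: `c i`, `d`, and `f i k`, `g i k`, where
`k : Fin (r-1)` corresponds to the superscript `k+2 ∈ {2,…,r}`. -/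
inductive KGen (r : ℕ) where
  | c (i : Fin 2)
  | d
  | f (i : Fin 2) (k : Fin (r - 1))
  | g (i : Fin 2) (k : Fin (r - 1))

/-- The relations `R₁⁽ʳ⁾ ∪ R₂⁽ʳ⁾` of the presentation `K_r` from Theorem 1.1. -/
def Krels (r : ℕ) (hr : 4 ≤ r) : Set (FreeGroup (KGen r)) :=
  let x : KGen r → FreeGroup (KGen r) := FreeGroup.of
  let d2 : Fin 2 → FreeGroup (KGen r) := fun i => if i = 0 then (x .d)⁻¹ else x .d
  let V : Fin 2 → Fin 2 → FreeGroup (KGen r) := fun i j => if i = j then 1 else d2 i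
  let k0 : Fin (r - 1) := ⟨0, by omega⟩
  let kr : Fin (r - 1) := ⟨r - 2, by omega⟩
  let W : Fin 2 → Fin 2 → FreeGroup (KGen r) := fun i j =>
    if i = j then ⁅x (.f i k0), (x (.c i))⁻¹⁆
    else x (.f i k0) * (x (.c j))⁻¹ * (x (.f i k0))⁻¹ * d2 i * x (.c j)
  let S : Fin (r - 1) → FreeGroup (KGen r) := fun k =>
    (x (.f 0 k))⁻¹ * (x (.f 1 k))⁻¹ * x .d * x (.f 0 k) * x (.f 1 k)
  let T : Fin (r - 1) → FreeGroup (KGen r) := fun k =>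
    (x (.c 0) * x (.g 0 k))⁻¹ * (x (.c 1) * x (.g 1 k))⁻¹ * x .d *
      (x (.c 0) * x (.g 0 k)) * (x (.c 1) * x (.g 1 k))
  { w | ∃ (i j : Fin 2) (ε : ℤ) (k l : Fin (r - 1)), (ε = 1 ∨ ε = -1) ∧ k ≠ l ∧
      (w = (x (.f i k)) ^ ε * x (.c j) * (x (.f i k)) ^ (-ε) *
             (x (.f i l)) ^ ε * (x (.c j))⁻¹ * (x (.f i l)) ^ (-ε) ∨
       w = (x (.f i k)) ^ ε * x .d * (x (.f i k)) ^ (-ε) *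
             (x (.f i l)) ^ ε * (x .d)⁻¹ * (x (.f i l)) ^ (-ε) ∨
       w = ⁅x (.c i), x (.g j k)⁆ * ⁅(x (.c j))⁻¹ * x (.f j k), x (.c i)⁆ ∨
       w = ⁅x (.f i k), x (.f j l)⁆ * (V i j)⁻¹ ∨
       w = ⁅x (.f i k), x (.g j l)⁆ * (W i j)⁻¹ ∨
       w = ⁅x (.c i) * x (.g i k), x (.c j) * x (.g j l)⁆ * (V i j)⁻¹ ∨
       w = (x .d)⁻¹ * (x (.c 0))⁻¹ * x (.f 0 k) * (x (.c 1))⁻¹ * (x (.f 0 k))⁻¹ *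
             (x .d)⁻¹ * x (.f 1 k) * x (.c 0) * (x (.f 1 k))⁻¹ * x (.c 1) ∨
       w = S k * T k) } ∪
  { ⁅⁅x (.f 0 kr), x (.f 1 kr)⁆, x .d⁆ }

/-- The group `K_r` of Theorem 1.1 (`r ≥ 4`). -/
def Kr (r : ℕ) (hr : 4 ≤ r) := PresentedGroup (Krels r hr)

instance (r : ℕ) (hr : 4 ≤ r) : Group (Kr r hr) := by unfold Kr; infer_instance


set_option maxHeartbeats 1000000 in
lemma lift_rel_eq_one {r : ℕ} (hr : 4 ≤ r) {G : Type*} [CommGroup G]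
    (e : KGen r → G) (he : e .d = 1) {w : FreeGroup (KGen r)} (hw : w ∈ Krels r hr) :
    FreeGroup.lift e w = 1 := by
  have hV : ∀ i j : Fin 2, FreeGroup.lift e
      (if i = j then 1 else if i = 0 then (FreeGroup.of (KGen.d : KGen r))⁻¹
        else FreeGroup.of KGen.d) = 1 := by
    intro i j; split_ifs <;> simp [he]
  have hd2 : ∀ i : Fin 2, FreeGroup.lift e
      (if i = 0 then (FreeGroup.of (KGen.d : KGen r))⁻¹ else FreeGroup.of KGen.d) = 1 := by
    intro i; split_ifs <;> simp [he]
  rw [← ofMul_eq_zero]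
  obtain hw | hw := hw
  · obtain ⟨i, j, ε, k, l, hε, hkl, hcase⟩ := hw
    rcases hcase with h | h | h | h | h | h | h | h <;> subst h
    · rcases hε with hε | hε <;> subst hε <;>
        simp only [map_mul, map_inv, map_zpow, FreeGroup.lift_apply_of, zpow_one, neg_neg,
          zpow_neg_one, ofMul_mul, ofMul_inv] <;> abel
    · rcases hε with hε | hε <;> subst hε <;>
        simp only [map_mul, map_inv, map_zpow, FreeGroup.lift_apply_of, zpow_one, neg_neg,
          zpow_neg_one, ofMul_mul, ofMul_inv] <;> abel
    · simp only [commutatorElement_def, map_mul, map_inv, FreeGroup.lift_apply_of,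
        ofMul_mul, ofMul_inv]; abel
    · simp only [commutatorElement_def, map_mul, map_inv, FreeGroup.lift_apply_of, hV,
        ofMul_mul, ofMul_inv, ofMul_one, inv_one]; abel
    · beta_reduce
      by_cases hij : i = j
      · rw [if_pos hij]
        simp only [commutatorElement_def, map_mul, map_inv, FreeGroup.lift_apply_of,
          ofMul_mul, ofMul_inv]; abel
      · rw [if_neg hij]
        simp only [commutatorElement_def, map_mul, map_inv, FreeGroup.lift_apply_of, hd2,
          ofMul_mul, ofMul_inv, ofMul_one]; abel
    · simp only [commutatorElement_def, map_mul, map_inv, FreeGroup.lift_apply_of, hV,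
        ofMul_mul, ofMul_inv, ofMul_one, inv_one]; abel
    · simp only [map_mul, map_inv, FreeGroup.lift_apply_of, he,
        ofMul_mul, ofMul_inv, ofMul_one, inv_one]; abel
    · simp only [map_mul, map_inv, FreeGroup.lift_apply_of, he,
        ofMul_mul, ofMul_inv, ofMul_one, inv_one]; abel
  · rw [Set.mem_singleton_iff] at hw; subst hw
    simp only [commutatorElement_def, map_mul, map_inv, FreeGroup.lift_apply_of,
      ofMul_mul, ofMul_inv]; abel

section Build

/-- Index type for the non-`d` generators. -/
abbrev KIdx (r : ℕ) := Fin 2 ⊕ (Fin 2 × Fin (r - 1)) ⊕ (Fin 2 × Fin (r - 1))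

noncomputable def KE (r : ℕ) (hr : 4 ≤ r) : KIdx r ≃ Fin (4 * r - 2) :=
  Fintype.equivFinOfCardEq (by
    simp only [Fintype.card_sum, Fintype.card_prod, Fintype.card_fin]
    omega)

noncomputable def Kdec (r : ℕ) (hr : 4 ≤ r) (i : Fin (4 * r - 2)) : KGen r :=
  match (KE r hr).symm i with
  | .inl j => .c j
  | .inr (.inl p) => .f p.1 p.2
  | .inr (.inr p) => .g p.1 p.2

noncomputable def Kee (r : ℕ) (hr : 4 ≤ r) : KGen r → Multiplicative (Fin (4 * r - 2) → ℤ)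
  | .c i => Multiplicative.ofAdd (Pi.single (KE r hr (.inl i)) 1)
  | .d => 1
  | .f i k => Multiplicative.ofAdd (Pi.single (KE r hr (.inr (.inl (i, k)))) 1)
  | .g i k => Multiplicative.ofAdd (Pi.single (KE r hr (.inr (.inr (i, k)))) 1)

lemma Kee_dec (r : ℕ) (hr : 4 ≤ r) (i : Fin (4 * r - 2)) :
    Kee r hr (Kdec r hr i) = Multiplicative.ofAdd (Pi.single i 1) := by
  unfold Kdec
  rcases h : (KE r hr).symm i with a | a | a <;>
    · simp only [Kee]
      congr 1
      rw [← h, Equiv.apply_symm_apply]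

noncomputable def Kψ (r : ℕ) (hr : 4 ≤ r) : Kr r hr →* Multiplicative (Fin (4 * r - 2) → ℤ) :=
  PresentedGroup.toGroup (f := Kee r hr) (fun w hw => lift_rel_eq_one hr _ rfl hw)

noncomputable def Kφ (r : ℕ) (hr : 4 ≤ r) : Abelianization (Kr r hr) →* Multiplicative (Fin (4 * r - 2) → ℤ) :=
  Abelianization.lift (Kψ r hr)

noncomputable def Kb (r : ℕ) (hr : 4 ≤ r) (i : Fin (4 * r - 2)) : Abelianization (Kr r hr) :=
  Abelianization.of (PresentedGroup.of (Kdec r hr i))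

noncomputable def Kι (r : ℕ) (hr : 4 ≤ r) : Multiplicative (Fin (4 * r - 2) → ℤ) →* Abelianization (Kr r hr) where
  toFun v := ∏ i, Kb r hr i ^ (Multiplicative.toAdd v i)
  map_one' := by simp
  map_mul' v w := by
    simp only [toAdd_mul, Pi.add_apply, zpow_add, Finset.prod_mul_distrib]

lemma Kφ_b (r : ℕ) (hr : 4 ≤ r) (i : Fin (4 * r - 2)) :
    Kφ r hr (Kb r hr i) = Multiplicative.ofAdd (Pi.single i 1) := by
  rw [Kb, Kφ]; erw [Abelianization.lift_apply_of]; rw [Kψ]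
  exact (PresentedGroup.toGroup.of _).trans (Kee_dec r hr i)

lemma Kφι (r : ℕ) (hr : 4 ≤ r) (v : Multiplicative (Fin (4 * r - 2) → ℤ)) : Kφ r hr (Kι r hr v) = v := by
  rw [Kι]
  simp only [MonoidHom.coe_mk, OneHom.coe_mk, map_prod, map_zpow, Kφ_b]
  calc ∏ i, Multiplicative.ofAdd (Pi.single i 1 : Fin (4 * r - 2) → ℤ) ^ (Multiplicative.toAdd v i)
      = ∏ i, Multiplicative.ofAdd ((Multiplicative.toAdd v i) • (Pi.single i 1 : Fin (4 * r - 2) → ℤ)) :=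
        Finset.prod_congr rfl (fun i _ => (ofAdd_zsmul _ _).symm)
    _ = Multiplicative.ofAdd (∑ i, Multiplicative.toAdd v i • (Pi.single i 1 : Fin (4 * r - 2) → ℤ)) :=
        (ofAdd_sum _ _).symm
    _ = Multiplicative.ofAdd (Multiplicative.toAdd v) := by
        congr 1
        funext j
        simp [Pi.single_apply, Finset.sum_ite_eq']
    _ = v := rfl


lemma d_eq_one (r : ℕ) (hr : 4 ≤ r) {A : Type*} [CommGroup A] (ψ : Kr r hr →* A) :
    ψ (PresentedGroup.of KGen.d) = 1 := by
  have hk : (0 : ℕ) < r - 1 := by omega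
  have hl : (1 : ℕ) < r - 1 := by omega
  set k : Fin (r - 1) := ⟨0, hk⟩
  set l : Fin (r - 1) := ⟨1, hl⟩
  set X : FreeGroup (KGen r) :=
    ⁅FreeGroup.of (KGen.f 0 k), FreeGroup.of (KGen.f 1 l)⁆ *
      (if (0 : Fin 2) = (1 : Fin 2) then (1 : FreeGroup (KGen r))
        else if (0 : Fin 2) = 0 then (FreeGroup.of (KGen.d : KGen r))⁻¹
        else FreeGroup.of KGen.d)⁻¹ with hXdef
  have hkl : k ≠ l := by
    intro h
    have := congrArg Fin.val h
    simp [k, l] at this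
  have hmem : X ∈ Krels r hr :=
    Set.mem_union_left _
      ⟨0, 1, 1, k, l, Or.inl rfl, hkl, Or.inr (Or.inr (Or.inr (Or.inl rfl)))⟩
  have h1 : (PresentedGroup.mk (Krels r hr) X : Kr r hr) = 1 :=
    (QuotientGroup.eq_one_iff X).mpr (Subgroup.subset_normalClosure hmem)
  have hX : X = ⁅FreeGroup.of (KGen.f 0 k), FreeGroup.of (KGen.f 1 l)⁆ *
      FreeGroup.of KGen.d := by
    rw [hXdef, if_neg (by decide), if_pos rfl, inv_inv]
  set χ : FreeGroup (KGen r) →* A := ψ.comp (PresentedGroup.mk (Krels r hr)) with hχ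
  have h2 : χ X = 1 := (congrArg ψ h1).trans (map_one ψ)
  rw [hX, map_mul, map_commutatorElement,
    commutatorElement_eq_one_iff_commute.mpr (Commute.all _ _), one_mul] at h2
  exact h2

lemma Kι_single (r : ℕ) (hr : 4 ≤ r) (i₀ : Fin (4 * r - 2)) :
    Kι r hr (Multiplicative.ofAdd (Pi.single i₀ 1)) = Kb r hr i₀ := by
  rw [Kι]
  simp only [MonoidHom.coe_mk, OneHom.coe_mk]
  simp only [toAdd_ofAdd]
  rw [Finset.prod_eq_single i₀ ?_ ?_]
  · rw [Pi.single_eq_same, zpow_one]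
  · intro j _ hj
    rw [Pi.single_eq_of_ne hj, zpow_zero]
  · intro h
    exact absurd (Finset.mem_univ i₀) h

lemma Kιφ (r : ℕ) (hr : 4 ≤ r) (a : Abelianization (Kr r hr)) :
    Kι r hr (Kφ r hr a) = a := by
  have key : (Kι r hr).comp (Kφ r hr) = MonoidHom.id _ := by
    apply Abelianization.hom_ext
    apply PresentedGroup.ext
    intro x
    have hφ : Kφ r hr (Abelianization.of (PresentedGroup.of x)) = Kee r hr x := by
      rw [Kφ]; erw [Abelianization.lift_apply_of]; rw [Kψ]
      exact PresentedGroup.toGroup.of _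
    show Kι r hr (Kφ r hr (Abelianization.of (PresentedGroup.of x))) =
      Abelianization.of (PresentedGroup.of x)
    rw [hφ]
    cases x with
    | d =>
      rw [show Kee r hr KGen.d = 1 from rfl, map_one]
      exact (d_eq_one r hr (Abelianization.of)).symm
    | c i =>
      rw [show Kee r hr (KGen.c i) =
        Multiplicative.ofAdd (Pi.single (KE r hr (.inl i)) 1) from rfl, Kι_single]
      rw [Kb, Kdec, Equiv.symm_apply_apply]
      rfl
    | f i k =>
      rw [show Kee r hr (KGen.f i k) =
        Multiplicative.ofAdd (Pi.single (KE r hr (.inr (.inl (i, k)))) 1) from rfl, Kι_single]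
      rw [Kb, Kdec, Equiv.symm_apply_apply]
      rfl
    | g i k =>
      rw [show Kee r hr (KGen.g i k) =
        Multiplicative.ofAdd (Pi.single (KE r hr (.inr (.inr (i, k)))) 1) from rfl, Kι_single]
      rw [Kb, Kdec, Equiv.symm_apply_apply]
      rfl
  exact DFunLike.congr_fun key a

end Build

/-- In any abelian quotient of `K_r` the image of `d` is trivial; consequently the
abelianization of `K_r` is free abelian of rank `4r - 2` (so `b₁(K_r) = 4r - 2`). -/
theorem stmt14 (r : ℕ) (hr : 4 ≤ r) :
    (∀ (A : Type) [CommGroup A] (ψ : Kr r hr →* A), ψ (PresentedGroup.of KGen.d) = 1) ∧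
    Nonempty (Abelianization (Kr r hr) ≃* Multiplicative (Fin (4 * r - 2) → ℤ)) := by
  refine ⟨fun A _ ψ => d_eq_one r hr ψ, ⟨?_⟩⟩
  exact
    { toFun := Kφ r hr
      invFun := Kι r hr
      left_inv := Kιφ r hr
      right_inv := Kφι r hr
      map_mul' := map_mul (Kφ r hr) }
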